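/- Let |γ_θ⟩ = A(θ)|0⟩ + B(θ)∑_j θ_j|j⟩ where A(θ) = 1 + (e^{−iT}−1)(1−‖θ‖²) and B(θ) = (e^{−iT}−1)√(1−‖θ‖²) (unnormalized), with the normalized states parametrized by G(θ) = (B(θ)/A(θ))·θ. If ‖G(θ)‖ ≤ 1/2 and ‖G(η)‖ ≤ 1/2, then 1 − |⟨γ̂_θ|γ̂_η⟩|² ≥ (1/4)·‖G(θ) − G(η)‖², where |γ̂_ζ⟩ = (|0⟩ + ∑_j G_j(ζ)|j⟩)/√(1+‖G(ζ)‖²). -/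

import Mathlib

/-- for the normalized affine vectors
`γ̂_u = (|0⟩ + ∑_j u_j|j⟩)/√(1+‖u‖²)` with `u = G(θ)`, `v = G(η)` satisfying
`‖u‖ ≤ 1/2`, `‖v‖ ≤ 1/2`, the overlap `|⟨γ̂_u|γ̂_v⟩|² = |1+⟨u,v⟩|²/((1+‖u‖²)(1+‖v‖²))`
satisfies `1 − |⟨γ̂_u|γ̂_v⟩|² ≥ ‖u − v‖²/4`. -/
theorem stmt10 (m : ℕ) (u v : EuclideanSpace ℂ (Fin m))
    (hu : ‖u‖ ≤ 1 / 2) (hv : ‖v‖ ≤ 1 / 2) :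
    ‖u - v‖ ^ 2 / 4
      ≤ 1 - ‖(1 + (inner ℂ u v : ℂ))‖ ^ 2 / ((1 + ‖u‖ ^ 2) * (1 + ‖v‖ ^ 2)) := by
  set s : ℂ := inner ℂ u v with hs
  have hCS : ‖s‖ ≤ ‖u‖ * ‖v‖ := norm_inner_le_norm u v
  have hnsq : ∀ z : ℂ, ‖z‖ ^ 2 = z.re ^ 2 + z.im ^ 2 := by
    intro z
    rw [Complex.sq_norm, Complex.normSq_apply]; ring
  have hCS2 : s.re ^ 2 + s.im ^ 2 ≤ ‖u‖ ^ 2 * ‖v‖ ^ 2 := by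
    have h := mul_self_le_mul_self (norm_nonneg s) hCS
    nlinarith [hnsq s]
  have hre : s.re ≤ ‖u‖ * ‖v‖ := by
    have := Complex.abs_re_le_norm s
    exact (le_abs_self s.re).trans (this.trans hCS)
  have h1 : ‖u - v‖ ^ 2 = ‖u‖ ^ 2 - 2 * s.re + ‖v‖ ^ 2 := by
    have := @norm_sub_sq ℂ _ _ _ _ u v
    simpa [hs] using this
  have h2 : ‖(1 + s)‖ ^ 2 = 1 + 2 * s.re + (s.re ^ 2 + s.im ^ 2) := by
    rw [hnsq]; simp; ring
  have hu2 : ‖u‖ ^ 2 ≤ 1 / 4 := by nlinarith [norm_nonneg u]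
  have hv2 : ‖v‖ ^ 2 ≤ 1 / 4 := by nlinarith [norm_nonneg v]
  have hD : (0:ℝ) < (1 + ‖u‖ ^ 2) * (1 + ‖v‖ ^ 2) := by positivity
  have key : ‖(1 + s)‖ ^ 2 / ((1 + ‖u‖ ^ 2) * (1 + ‖v‖ ^ 2)) ≤ 1 - ‖u - v‖ ^ 2 / 4 := by
    rw [div_le_iff₀ hD]
    have hN : (0:ℝ) ≤ ‖u - v‖ ^ 2 := sq_nonneg _
    have hA : (0:ℝ) ≤ ‖u‖ ^ 2 := sq_nonneg _
    have hB : (0:ℝ) ≤ ‖v‖ ^ 2 := sq_nonneg _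
    nlinarith [sq_nonneg (‖u‖ - ‖v‖), sq_nonneg s.im, norm_nonneg u, norm_nonneg v,
      mul_nonneg hN (by linarith : (0:ℝ) ≤ 1/4 - ‖u‖^2),
      mul_nonneg hN (by linarith : (0:ℝ) ≤ 1/4 - ‖v‖^2),
      mul_nonneg (mul_nonneg hN hA) (by linarith : (0:ℝ) ≤ 1/4 - ‖v‖^2),
      hCS2, h1, h2, hre]
  linarith
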